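/- Let G and M be real q × q matrices with Mᵀ · M = 1, let α, σ, μ be real numbers with α ≠ 0, and let w be a vector in ℝ^q such that (M · (α G + σ I) · Mᵀ) · w = μ w. Then G · (Mᵀ w) = ((μ − σ)/α) · (Mᵀ w). That is, eigenpairs of the masked matrix G' = M(αG + σI)Mᵀ recover eigenpairs of G via the unmasking λ = (μ − σ)/α and v = Mᵀ w. -/
import Mathlib

open Matrix

/-- Unmasking correctness of the eigenvalue decomposition step of INVSQRT. -/
theorem invsqrt_unmask_eigen {q : ℕ} (G M : Matrix (Fin q) (Fin q) ℝ)
    (hM : Mᵀ * M = 1) (α σ μ : ℝ) (hα : α ≠ 0) (w : Fin q → ℝ)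
    (hw : (M * (α • G + σ • (1 : Matrix (Fin q) (Fin q) ℝ)) * Mᵀ).mulVec w = μ • w) :
    G.mulVec (Mᵀ.mulVec w) = ((μ - σ) / α) • (Mᵀ.mulVec w) := by
  set v := Mᵀ.mulVec w with hv
  have h1 : (α • G + σ • (1 : Matrix (Fin q) (Fin q) ℝ)).mulVec v = μ • v := by
    have := congrArg Mᵀ.mulVec hw
    rw [← mulVec_mulVec, ← mulVec_mulVec] at this
    rw [mulVec_mulVec, mulVec_mulVec, hM, Matrix.one_mul] at this
    simpa [hv, ← mulVec_mulVec, mulVec_smul] using this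
  have h2 : α • G.mulVec v = (μ - σ) • v := by
    have := h1
    rw [add_mulVec, smul_mulVec, smul_mulVec, one_mulVec] at this
    rw [eq_sub_of_add_eq this, sub_smul]
  have := congrArg (fun x => α⁻¹ • x) h2
  simpa [smul_smul, inv_mul_cancel₀ hα, div_eq_inv_mul, mul_comm] using this
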